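/- For every k ∈ ℂ, every pair of column vectors y, ỹ ∈ ℂ², and each ε ∈ {+1,−1}: P_ε·{ (2·a₁₁^{−ε}·c₁₁^{ε} − b₁₁^{−ε}·b₁₁^{ε})·I + [2(k²+conj(k)²)·conj(b₁₁^{−ε}) − 4·conj(k)·conj(c₁₁^{−ε})]·|y⟩⟨y| }·P_ε = 4k²·σ₂·P_{−ε}·(b₁₁^{ε}·|y⟩⟨y|)·P_{−ε}·σ₂, where P_ε = (I+εσ₃)/2. -/
import Mathlib


open Matrix Complex ComplexConjugate

noncomputable section

abbrev M2 := Matrix (Fin 2) (Fin 2) ℂ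
abbrev Vec2 := Matrix (Fin 2) (Fin 1) ℂ

def sigma3 : M2 := !![1, 0; 0, -1]
def sigma2 : M2 := !![0, -Complex.I; Complex.I, 0]

/-- ⟨u|M|v⟩ = u†Mv -/
def qform (u : Vec2) (M : M2) (v : Vec2) : ℂ := (uᴴ * M * v) 0 0

def a11 (k : ℂ) (y : Vec2) (ε : ℂ) : ℂ :=
  k * qform y (1 + ε • sigma3) y + conj k * qform y (1 - ε • sigma3) y

def a12 (k : ℂ) (y yt : Vec2) (ε : ℂ) : ℂ :=
  k * qform y (1 + ε • sigma3) yt + conj k * qform y (1 - ε • sigma3) yt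

def a21 (k : ℂ) (y yt : Vec2) (ε : ℂ) : ℂ :=
  k * qform yt (1 + ε • sigma3) y + conj k * qform yt (1 - ε • sigma3) y

def a22 (k : ℂ) (yt : Vec2) (ε : ℂ) : ℂ :=
  k * qform yt (1 + ε • sigma3) yt + conj k * qform yt (1 - ε • sigma3) yt

def b11 (k : ℂ) (y : Vec2) (ε : ℂ) : ℂ :=
  (k ^ 2 + (conj k) ^ 2) * qform y (1 + ε • sigma3) y
    + 2 * k * conj k * qform y (1 - ε • sigma3) y

def b12 (k : ℂ) (y yt : Vec2) (ε : ℂ) : ℂ :=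
  (k ^ 2 + (conj k) ^ 2) * qform y (1 + ε • sigma3) yt
    + 2 * k * conj k * qform y (1 - ε • sigma3) yt

def b21 (k : ℂ) (y yt : Vec2) (ε : ℂ) : ℂ :=
  (k ^ 2 + (conj k) ^ 2) * qform yt (1 + ε • sigma3) y
    + 2 * k * conj k * qform yt (1 - ε • sigma3) y

def c11 (k : ℂ) (y : Vec2) (ε : ℂ) : ℂ :=
  (k ^ 3 + 3 * k * (conj k) ^ 2) * qform y (1 + ε • sigma3) y
    + ((conj k) ^ 3 + 3 * conj k * k ^ 2) * qform y (1 - ε • sigma3) y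

def Δf (k : ℂ) (y yt : Vec2) (ε : ℂ) : ℂ :=
  (k ^ 2 - (conj k) ^ 2) ^ 2
      * (a21 k y yt ε * a12 k y yt ε - a11 k y ε * a22 k yt ε)
    + 2 * a11 k y ε * c11 k y (-ε) - b11 k y ε * b11 k y (-ε)
    + (k ^ 2 - (conj k) ^ 2)
      * (a21 k y yt ε * b11 k y (-ε) - a12 k y yt ε * b11 k y ε
          + a11 k y ε * (b12 k y yt ε - b21 k y yt (-ε)))

/-- P_ε = (I+εσ₃)/2 -/
def Pe (ε : ℂ) : M2 := (1 / 2 : ℂ) • (1 + ε • sigma3)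

set_option maxHeartbeats 2000000 in
theorem lemma2_third (k : ℂ) (y yt : Vec2) (ε : ℂ) (hε : ε = 1 ∨ ε = -1) :
    Pe ε * ((2 * a11 k y (-ε) * c11 k y ε - b11 k y (-ε) * b11 k y ε) • (1 : M2)
        + (2 * (k ^ 2 + (conj k) ^ 2) * conj (b11 k y (-ε))
            - 4 * conj k * conj (c11 k y (-ε))) • (y * yᴴ)) * Pe ε
      = (4 * k ^ 2) • (sigma2 * Pe (-ε) * (b11 k y ε • (y * yᴴ)) * Pe (-ε) * sigma2) := by
  rcases hε with h | h <;> subst h <;>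
    simp only [Pe, a11, b11, c11, qform, sigma3, sigma2] <;>
    ext i j <;> fin_cases i <;> fin_cases j <;>
    simp [Matrix.mul_apply, Fin.sum_univ_succ, Matrix.vecMul, dotProduct, Matrix.smul_apply, Matrix.add_apply, Matrix.one_apply, Matrix.conjTranspose_apply,
      map_add, _root_.map_mul, map_pow, map_sub, map_ofNat, Complex.conj_conj] <;>
    ring_nf <;> simp only [Complex.I_sq] <;> ring
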